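/- Let f be a holomorphic self-map of the unit disk D without fixed points. If the hyperbolic step s^f vanishes at one point z_0 ∈ D, then every left straightening of {f^n} is a constant map. -/

import Mathlib

open Complex Metric Filter Set
open Topology

/-- Inverse hyperbolic tangent. -/
noncomputable def artanh (t : ℝ) : ℝ := (1/2) * Real.log ((1 + t) / (1 - t))

/-- Poincaré distance on the unit disk. -/
noncomputable def pd (z w : ℂ) : ℝ :=
  artanh ‖(w - z) / (1 - (starRingEnd ℂ) z * w)‖

/-- Holomorphic self-map of the unit disk. -/
def HolSelfDisk (f : ℂ → ℂ) : Prop :=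
  DifferentiableOn ℂ f (ball (0:ℂ) 1) ∧ MapsTo f (ball (0:ℂ) 1) (ball (0:ℂ) 1)

/-- A pair of maps that are mutually inverse holomorphic self-maps of the disk,
i.e. an automorphism of the disk together with its inverse. -/
def IsDiskAutPair (γ γinv : ℂ → ℂ) : Prop :=
  HolSelfDisk γ ∧ HolSelfDisk γinv ∧
  (∀ z ∈ ball (0:ℂ) 1, γinv (γ z) = z) ∧ (∀ z ∈ ball (0:ℂ) 1, γ (γinv z) = z)

noncomputable def mob (a z : ℂ) : ℂ := (z - a) / (1 - (starRingEnd ℂ) a * z)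

lemma key_normSq (z w : ℂ) :
    normSq (1 - (starRingEnd ℂ) z * w) = normSq (w - z) + (1 - normSq z) * (1 - normSq w) := by
  simp [Complex.normSq_apply, Complex.mul_re, Complex.mul_im, Complex.sub_re, Complex.sub_im]
  ring

lemma abs_sub_lt {z w : ℂ} (hz : z ∈ ball (0:ℂ) 1) (hw : w ∈ ball (0:ℂ) 1) :
    ‖w - z‖ < ‖1 - (starRingEnd ℂ) z * w‖ := by
  rw [mem_ball_zero_iff] at hz hw
  have hz2 : normSq z < 1 := by
    rw [Complex.normSq_eq_norm_sq]; nlinarith [norm_nonneg z, hz]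
  have hw2 : normSq w < 1 := by
    rw [Complex.normSq_eq_norm_sq]; nlinarith [norm_nonneg w, hw]
  have : normSq (w - z) < normSq (1 - (starRingEnd ℂ) z * w) := by
    rw [key_normSq]; nlinarith
  rw [Complex.norm_def, Complex.norm_def]
  exact Real.sqrt_lt_sqrt (normSq_nonneg _) this

lemma den_ne {z w : ℂ} (hz : z ∈ ball (0:ℂ) 1) (hw : w ∈ ball (0:ℂ) 1) :
    (1 - (starRingEnd ℂ) z * w) ≠ 0 :=
  norm_pos_iff.mp (lt_of_le_of_lt (norm_nonneg _) (abs_sub_lt hz hw))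

lemma mob_mem {a z : ℂ} (ha : a ∈ ball (0:ℂ) 1) (hz : z ∈ ball (0:ℂ) 1) :
    mob a z ∈ ball (0:ℂ) 1 := by
  rw [mem_ball_zero_iff, mob, norm_div, div_lt_one
    (lt_of_le_of_lt (norm_nonneg _) (abs_sub_lt ha hz))]
  exact abs_sub_lt ha hz

lemma mob_abs_lt {a z : ℂ} (ha : a ∈ ball (0:ℂ) 1) (hz : z ∈ ball (0:ℂ) 1) :
    ‖mob a z‖ < 1 := by
  exact mem_ball_zero_iff.mp (mob_mem ha hz)

lemma mob_diff {a : ℂ} (ha : a ∈ ball (0:ℂ) 1) :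
    DifferentiableOn ℂ (mob a) (ball (0:ℂ) 1) := by
  apply DifferentiableOn.div
  · exact (differentiableOn_id.sub (differentiableOn_const _))
  · exact ((differentiableOn_const _).sub ((differentiableOn_const _).mul differentiableOn_id))
  · exact fun z hz => den_ne ha hz

lemma mob_self (a : ℂ) : mob a a = 0 := by simp [mob]

lemma mob_cancel {a z : ℂ} (ha : a ∈ ball (0:ℂ) 1) (hz : z ∈ ball (0:ℂ) 1) :
    mob (-a) (mob a z) = z := by
  have d1 : (1 - (starRingEnd ℂ) a * z) ≠ 0 := den_ne ha hz
  have d2 : (1 - (starRingEnd ℂ) a * a) ≠ 0 := den_ne ha ha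
  rw [mob, mob]
  rw [show (z - a) / (1 - (starRingEnd ℂ) a * z) - -a
      = (z * (1 - (starRingEnd ℂ) a * a)) / (1 - (starRingEnd ℂ) a * z) by
    rw [eq_div_iff d1]; linear_combination (div_mul_cancel₀ (z - a) d1)]
  rw [show 1 - (starRingEnd ℂ) (-a) * ((z - a) / (1 - (starRingEnd ℂ) a * z))
      = (1 - (starRingEnd ℂ) a * a) / (1 - (starRingEnd ℂ) a * z) by
    rw [map_neg, eq_div_iff d1]; linear_combination ((starRingEnd ℂ) a) * (div_mul_cancel₀ (z - a) d1)]
  rw [div_div_div_eq, mul_comm (1 - (starRingEnd ℂ) a * z)]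
  rw [mul_div_mul_right _ _ d1, mul_div_assoc, div_self d2, mul_one]

lemma neg_mem_ball {a : ℂ} (ha : a ∈ ball (0:ℂ) 1) : -a ∈ ball (0:ℂ) 1 := by
  rw [mem_ball_zero_iff] at *; simpa using ha

lemma mob_neg_zero (a : ℂ) : mob (-a) 0 = a := by simp [mob]

lemma schwarz_pick {F : ℂ → ℂ} (hF : HolSelfDisk F) {a b : ℂ}
    (ha : a ∈ ball (0:ℂ) 1) (hb : b ∈ ball (0:ℂ) 1) :
    ‖mob (F a) (F b)‖ ≤ ‖mob a b‖ := by
  have hna : -a ∈ ball (0:ℂ) 1 := neg_mem_ball ha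
  have hFa : F a ∈ ball (0:ℂ) 1 := hF.2 ha
  set G : ℂ → ℂ := (mob (F a)) ∘ F ∘ (mob (-a)) with hG
  have hGd : DifferentiableOn ℂ G (ball (0:ℂ) 1) := by
    apply (mob_diff hFa).comp
    · exact hF.1.comp (mob_diff hna) (fun z hz => mob_mem hna hz)
    · exact (hF.2.comp (fun z hz => mob_mem hna hz))
  have hGm : MapsTo G (ball (0:ℂ) 1) (ball (0:ℂ) 1) :=
    fun z hz => mob_mem hFa (hF.2 (mob_mem hna hz))
  have hG0 : G 0 = 0 := by
    simp only [hG, Function.comp_apply, mob_neg_zero, mob_self]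
  have key := Complex.norm_le_norm_of_mapsTo_ball hGd (hGm.mono_right ball_subset_closedBall) hG0 (mob_abs_lt ha hb)
  have : G (mob a b) = mob (F a) (F b) := by
    simp only [hG, Function.comp_apply, mob_cancel ha hb]
  rwa [this] at key

lemma artanh_le_artanh {s t : ℝ} (h0 : 0 ≤ s) (hst : s ≤ t) (ht : t < 1) :
    artanh s ≤ artanh t := by
  unfold artanh
  have h1 : (0:ℝ) < 1 - t := by linarith
  have h2 : (0:ℝ) < 1 - s := by linarith
  have h3 : (0:ℝ) < (1 + s) / (1 - s) := by positivity
  apply mul_le_mul_of_nonneg_left _ (by norm_num)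
  apply Real.log_le_log h3
  rw [div_le_div_iff₀ h2 h1]; nlinarith

lemma artanh_nonneg {t : ℝ} (h0 : 0 ≤ t) (ht : t < 1) : 0 ≤ artanh t := by
  have := artanh_le_artanh (le_refl 0) h0 ht
  simpa [artanh] using this

lemma artanh_pos {t : ℝ} (h0 : 0 < t) (ht : t < 1) : 0 < artanh t := by
  apply mul_pos (by norm_num)
  apply Real.log_pos
  rw [lt_div_iff₀ (by linarith)]; linarith

lemma dist_le_two_mob {u v : ℂ} (hu : u ∈ ball (0:ℂ) 1) (hv : v ∈ ball (0:ℂ) 1) :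
    dist u v ≤ 2 * ‖mob u v‖ := by
  have hne := den_ne hu hv
  have h1 : ‖1 - (starRingEnd ℂ) u * v‖ ≤ 2 := by
    calc ‖1 - (starRingEnd ℂ) u * v‖
        ≤ ‖(1:ℂ)‖ + ‖(starRingEnd ℂ) u * v‖ := by
          simpa using norm_sub_le (1:ℂ) ((starRingEnd ℂ) u * v)
      _ ≤ 2 := by
          rw [norm_one, norm_mul, Complex.norm_conj]
          rw [mem_ball_zero_iff] at hu hv
          nlinarith [norm_nonneg u, norm_nonneg v]
  have h2 : ‖v - u‖
      = ‖mob u v‖ * ‖1 - (starRingEnd ℂ) u * v‖ := by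
    rw [mob, norm_div, div_mul_cancel₀]
    exact norm_ne_zero_iff.mpr hne
  rw [Complex.dist_eq, norm_sub_rev, h2, mul_comm]
  exact mul_le_mul_of_nonneg_right h1 (norm_nonneg _)

theorem stmt8 (f : ℂ → ℂ) (hf : HolSelfDisk f)
    (hfix : ∀ z ∈ ball (0:ℂ) 1, f z ≠ z)
    (z₀ : ℂ) (hz₀ : z₀ ∈ ball (0:ℂ) 1)
    (hstep : Tendsto (fun n => pd (f^[n] z₀) (f^[n+1] z₀)) atTop (nhds 0)) :
    ∀ (γ γinv : ℕ → ℂ → ℂ) (h : ℂ → ℂ),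
      (∀ n, IsDiskAutPair (γ n) (γinv n)) → HolSelfDisk h →
      TendstoLocallyUniformlyOn (fun n z => γinv n (f^[n] z)) h atTop (ball (0:ℂ) 1) →
      ∃ c : ℂ, ∀ z ∈ ball (0:ℂ) 1, h z = c := by
  intro γ γinv h haut hh hconv
  have hfD : ∀ n, MapsTo f^[n] (ball (0:ℂ) 1) (ball (0:ℂ) 1) := fun n => hf.2.iterate n
  have hfdiff : ∀ n, DifferentiableOn ℂ f^[n] (ball (0:ℂ) 1) := by
    intro n; induction n with
    | zero => simpa using differentiableOn_id
    | succ n ih =>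
        rw [Function.iterate_succ']
        exact hf.1.comp ih (hfD n)
  set g : ℕ → ℂ → ℂ := fun n z => γinv n (f^[n] z) with hgdef
  have hgdiff : ∀ n, DifferentiableOn ℂ (g n) (ball (0:ℂ) 1) :=
    fun n => ((haut n).2.1.1).comp (hfdiff n) (hfD n)
  have hgmap : ∀ n, MapsTo (g n) (ball (0:ℂ) 1) (ball (0:ℂ) 1) :=
    fun n => ((haut n).2.1.2).comp (hfD n)
  have ha : f z₀ ∈ ball (0:ℂ) 1 := hf.2 hz₀
  have t0 : Tendsto (fun n => g n z₀) atTop (𝓝 (h z₀)) := hconv.tendsto_at hz₀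
  have ta : Tendsto (fun n => g n (f z₀)) atTop (𝓝 (h (f z₀))) := hconv.tendsto_at ha
  -- the pseudo-hyperbolic step tends to zero
  have hρ : Tendsto (fun n => ‖mob (f^[n] z₀) (f^[n+1] z₀)‖) atTop (𝓝 0) := by
    rw [Metric.tendsto_atTop]
    intro ε hε
    set ε' : ℝ := min ε (1/2) with hε'def
    have hε'0 : 0 < ε' := lt_min hε (by norm_num)
    have hε'1 : ε' < 1 := lt_of_le_of_lt (min_le_right _ _) (by norm_num)
    obtain ⟨N, hN⟩ := Metric.tendsto_atTop.mp hstep (artanh ε') (artanh_pos hε'0 hε'1)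
    refine ⟨N, fun n hn => ?_⟩
    have hlt : ‖mob (f^[n] z₀) (f^[n+1] z₀)‖ < 1 :=
      mob_abs_lt (hfD n hz₀) (hfD (n+1) hz₀)
    have hnon : 0 ≤ ‖mob (f^[n] z₀) (f^[n+1] z₀)‖ := norm_nonneg _
    rw [Real.dist_eq, sub_zero, _root_.abs_of_nonneg hnon]
    by_contra hcon
    push_neg at hcon
    have h1 : artanh ε' ≤ artanh (‖mob (f^[n] z₀) (f^[n+1] z₀)‖) :=
      artanh_le_artanh hε'0.le (le_trans (min_le_left _ _) hcon) hlt
    have h2 := hN n hn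
    rw [Real.dist_eq, sub_zero] at h2
    have hpd : pd (f^[n] z₀) (f^[n+1] z₀)
        = artanh (‖mob (f^[n] z₀) (f^[n+1] z₀)‖) := rfl
    rw [hpd, _root_.abs_of_nonneg (artanh_nonneg hnon hlt)] at h2
    linarith
  -- Step A : h (f z₀) = h z₀
  have hc : h (f z₀) = h z₀ := by
    have hda : ∀ n, dist (g n z₀) (g n (f z₀))
        ≤ 2 * ‖mob (f^[n] z₀) (f^[n+1] z₀)‖ := by
      intro n
      have e : f^[n] (f z₀) = f^[n+1] z₀ := (Function.iterate_succ_apply f n z₀).symm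
      have h1 : dist (g n z₀) (g n (f z₀)) ≤ 2 * ‖mob (g n z₀) (g n (f z₀))‖ :=
        dist_le_two_mob (hgmap n hz₀) (hgmap n ha)
      have h2 : ‖mob (γinv n (f^[n] z₀)) (γinv n (f^[n] (f z₀)))‖
          ≤ ‖mob (f^[n] z₀) (f^[n] (f z₀))‖ :=
        schwarz_pick (haut n).2.1 (hfD n hz₀) (hfD n ha)
      rw [e] at h2
      calc dist (g n z₀) (g n (f z₀))
          ≤ 2 * ‖mob (g n z₀) (g n (f z₀))‖ := h1
        _ ≤ 2 * ‖mob (f^[n] z₀) (f^[n+1] z₀)‖ := by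
            simp only [hgdef]; rw [e]; linarith
    have hdist0 : Tendsto (fun n => dist (g n z₀) (g n (f z₀))) atTop (𝓝 0) := by
      apply squeeze_zero (fun n => dist_nonneg) hda
      have := hρ.const_mul (2:ℝ)
      simpa using this
    have := tendsto_nhds_unique (t0.dist ta) hdist0
    exact (dist_eq_zero.mp this).symm
  -- Step B : points near f z₀ with h-value h z₀
  have key : ∀ ε : ℝ, 0 < ε → ε ≤ (1 - ‖f z₀‖)/2 →
      ∃ w ∈ closedBall (f z₀) ε, w ≠ f z₀ ∧ h w = h z₀ := by
    intro ε hε hεr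
    by_contra hcon
    push_neg at hcon
    have haa : ‖f z₀‖ < 1 := mem_ball_zero_iff.mp ha
    have hsub : closedBall (f z₀) ε ⊆ ball (0:ℂ) 1 := by
      intro x hx
      rw [mem_closedBall] at hx
      rw [mem_ball]
      calc dist x 0 ≤ dist x (f z₀) + dist (f z₀) 0 := dist_triangle _ _ _
        _ = dist x (f z₀) + ‖f z₀‖ := by rw [dist_zero_right]
        _ < 1 := by linarith
    have hsph : sphere (f z₀) ε ⊆ closedBall (f z₀) ε := sphere_subset_closedBall
    have hhcont : ContinuousOn (fun z => ‖h z - h z₀‖) (sphere (f z₀) ε) :=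
      ((hh.1.continuousOn.mono (hsph.trans hsub)).sub continuousOn_const).norm
    obtain ⟨x₀, hx₀s, hx₀min⟩ := (isCompact_sphere _ _).exists_isMinOn
      (NormedSpace.sphere_nonempty.mpr hε.le) hhcont
    set δ := ‖h x₀ - h z₀‖ with hδdef
    have hx₀ne : x₀ ≠ f z₀ := by
      intro hEq
      have := mem_sphere.mp hx₀s
      rw [hEq, dist_self] at this
      linarith
    have hδpos : 0 < δ :=
      norm_pos_iff.mpr (sub_ne_zero.mpr (hcon x₀ (hsph hx₀s) hx₀ne))
    have hU : TendstoUniformlyOn (fun n z => γinv n (f^[n] z)) h atTop (closedBall (f z₀) ε) :=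
      (tendstoLocallyUniformlyOn_iff_forall_isCompact isOpen_ball).mp hconv _ hsub
        (isCompact_closedBall _ _)
    have ev1 := Metric.tendstoUniformlyOn_iff.mp hU (δ/4) (by positivity)
    have ev2 : ∀ᶠ n in atTop, dist (g n z₀) (h z₀) < δ/4 :=
      Metric.tendsto_nhds.mp t0 (δ/4) (by positivity)
    obtain ⟨n, h1n, h2n⟩ := (ev1.and ev2).exists
    set φ : ℂ → ℂ := fun z => g n z - g n z₀ with hφdef
    have hsphere_low : ∀ z ∈ sphere (f z₀) ε, δ/2 ≤ ‖φ z‖ := by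
      intro z hzs
      have hmin : δ ≤ ‖h z - h z₀‖ := hx₀min hzs
      have hd1 : ‖h z - g n z‖ < δ/4 := by
        have := h1n z (hsph hzs); rwa [dist_eq_norm] at this
      have hd2 : ‖g n z₀ - h z₀‖ < δ/4 := by rw [← dist_eq_norm]; exact h2n
      have hsplit : h z - h z₀ = (h z - g n z) + φ z + (g n z₀ - h z₀) := by
        simp only [hφdef]; ring
      have h3 : ‖h z - h z₀‖ ≤ ‖h z - g n z‖ + ‖φ z‖ + ‖g n z₀ - h z₀‖ := by
        rw [hsplit]; exact norm_add₃_le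
      linarith
    have hexz : ∃ w ∈ ball (f z₀) ε, φ w = 0 := by
      by_contra hno
      push_neg at hno
      have hnz : ∀ z ∈ closedBall (f z₀) ε, φ z ≠ 0 := by
        intro z hzc
        rcases (mem_closedBall.mp hzc).lt_or_eq with hlt | heq
        · exact hno z (mem_ball.mpr hlt)
        · have := hsphere_low z (mem_sphere.mpr heq)
          intro h0; rw [h0, norm_zero] at this; linarith
      have hφdiff : DifferentiableOn ℂ φ (ball (0:ℂ) 1) :=
        (hgdiff n).sub (differentiableOn_const _)
      have hdc : DiffContOnCl ℂ (fun z => (φ z)⁻¹) (ball (f z₀) ε) := by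
        constructor
        · exact (hφdiff.mono (ball_subset_closedBall.trans hsub)).inv
            (fun z hz => hnz z (ball_subset_closedBall hz))
        · rw [closure_ball _ hε.ne']
          exact (hφdiff.continuousOn.mono hsub).inv₀ hnz
      have hbound : ∀ z ∈ frontier (ball (f z₀) ε), ‖(φ z)⁻¹‖ ≤ 2/δ := by
        intro z hzf
        rw [frontier_ball _ hε.ne'] at hzf
        have h5 := hsphere_low z hzf
        rw [norm_inv, show (2:ℝ)/δ = (δ/2)⁻¹ from (inv_div δ 2).symm]
        exact inv_anti₀ (by positivity) h5
      have hmax := Complex.norm_le_of_forall_mem_frontier_norm_le isBounded_ball hdc hbound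
        (by rw [closure_ball _ hε.ne']; exact mem_closedBall_self hε.le)
      rw [norm_inv] at hmax
      have hφa_pos : 0 < ‖φ (f z₀)‖ :=
        norm_pos_iff.mpr (hnz _ (mem_closedBall_self hε.le))
      have hlow : δ/2 ≤ ‖φ (f z₀)‖ := by
        by_contra hlt
        push_neg at hlt
        have h6 : (δ/2)⁻¹ < ‖φ (f z₀)‖⁻¹ := inv_strictAnti₀ hφa_pos hlt
        rw [inv_div] at h6
        linarith
      have hup : ‖φ (f z₀)‖ < δ/2 := by
        have hd1 : ‖h (f z₀) - g n (f z₀)‖ < δ/4 := by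
          have := h1n (f z₀) (mem_closedBall_self hε.le)
          rwa [dist_eq_norm] at this
        have hd2 : ‖g n z₀ - h z₀‖ < δ/4 := by rw [← dist_eq_norm]; exact h2n
        have hsplit : φ (f z₀) = -(h (f z₀) - g n (f z₀)) + -(g n z₀ - h z₀)
            + (h (f z₀) - h z₀) := by simp only [hφdef]; ring
        have h3 : ‖φ (f z₀)‖ ≤ ‖h (f z₀) - g n (f z₀)‖ + ‖g n z₀ - h z₀‖
            + ‖h (f z₀) - h z₀‖ := by
          rw [hsplit]
          calc ‖-(h (f z₀) - g n (f z₀)) + -(g n z₀ - h z₀) + (h (f z₀) - h z₀)‖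
              ≤ ‖-(h (f z₀) - g n (f z₀))‖ + ‖-(g n z₀ - h z₀)‖ + ‖h (f z₀) - h z₀‖ :=
                norm_add₃_le
            _ = ‖h (f z₀) - g n (f z₀)‖ + ‖g n z₀ - h z₀‖ + ‖h (f z₀) - h z₀‖ := by
                rw [norm_neg, norm_neg]
        rw [hc, sub_self, norm_zero] at h3
        rw [hc] at hd1
        linarith
      linarith
    obtain ⟨w, hwb, hw0⟩ := hexz
    have hwD : w ∈ ball (0:ℂ) 1 := hsub (ball_subset_closedBall hwb)
    have hgeq : γinv n (f^[n] w) = γinv n (f^[n] z₀) := by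
      have := sub_eq_zero.mp hw0
      simpa [hgdef] using this
    have hiter : f^[n] w = f^[n] z₀ := by
      have e1 := (haut n).2.2.2 _ (hfD n hwD)
      have e2 := (haut n).2.2.2 _ (hfD n hz₀)
      rw [← e1, ← e2, hgeq]
    have hwne : w ≠ f z₀ := by
      intro hEq
      apply hfix (f^[n] z₀) (hfD n hz₀)
      have hstep2 : f^[n] (f z₀) = f^[n] z₀ := by rw [← hEq]; exact hiter
      rw [← Function.iterate_succ_apply, Function.iterate_succ_apply'] at hstep2
      exact hstep2
    have hhw : h w = h z₀ := by
      have hall : (fun m => g (m + n) w) = (fun m => g (m + n) z₀) := by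
        funext m
        have : f^[m + n] w = f^[m + n] z₀ := by
          rw [Function.iterate_add_apply, hiter, ← Function.iterate_add_apply]
        simp only [hgdef]
        rw [this]
      have tw : Tendsto (fun m => g (m + n) w) atTop (𝓝 (h w)) :=
        (hconv.tendsto_at hwD).comp (tendsto_add_atTop_nat n)
      have tz : Tendsto (fun m => g (m + n) z₀) atTop (𝓝 (h z₀)) :=
        (hconv.tendsto_at hz₀).comp (tendsto_add_atTop_nat n)
      rw [hall] at tw
      exact tendsto_nhds_unique tw tz
    exact hcon w (ball_subset_closedBall hwb) hwne hhw
  -- identity theorem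
  have hana : AnalyticOnNhd ℂ h (ball (0:ℂ) 1) := hh.1.analyticOnNhd isOpen_ball
  have hana2 : AnalyticOnNhd ℂ (fun _ => h z₀) (ball (0:ℂ) 1) := analyticOnNhd_const
  have haa : ‖f z₀‖ < 1 := mem_ball_zero_iff.mp ha
  have hfreq : ∃ᶠ z in 𝓝[≠] (f z₀), h z = h z₀ := by
    rw [frequently_iff]
    intro U hU
    rw [mem_nhdsWithin] at hU
    obtain ⟨t, ht_open, ht_mem, ht_sub⟩ := hU
    obtain ⟨ε₁, hε₁, hball⟩ := Metric.isOpen_iff.mp ht_open _ ht_mem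
    set ε := min (ε₁/2) ((1 - ‖f z₀‖)/2) with hεdef
    obtain ⟨w, hwc, hwne, hwh⟩ := key ε (lt_min (by linarith) (by linarith)) (min_le_right _ _)
    have hwball : w ∈ ball (f z₀) ε₁ := by
      rw [mem_ball]
      have h7 := mem_closedBall.mp hwc
      have h8 : ε ≤ ε₁/2 := min_le_left _ _
      linarith
    exact ⟨w, ht_sub ⟨hball hwball, by simpa using hwne⟩, hwh⟩
  have heq := hana.eqOn_of_preconnected_of_frequently_eq hana2
    (convex_ball (0:ℂ) 1).isPreconnected ha hfreq
  exact ⟨h z₀, fun z hz => heq hz⟩
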